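/- Let N ≥ 1, b ≥ 0 be integers, dist : Fin N → ℕ with dist i ≤ b for all i, and a : Fin N → Bool a binary affinity with N⁺ ≥ 1 positives. Then the average of AP(σ) over the finite nonempty set of all rankings σ compatible with dist equals the tie-aware closed form ∑_{d=0}^{b} (n_d⁺ / (n_d · N⁺)) · ∑_{t = N_{d−1}+1}^{N_d} ( N_{d−1}⁺ + (t − N_{d−1} − 1) · (n_d⁺ − 1)/(n_d − 1) + 1 ) / t, where all quantities are cast to ℝ, summands with n_d = 0 contribute 0, and when n_d = 1 the factor (t − N_{d−1} − 1) vanishes so the quotient (n_d⁺ − 1)/(n_d − 1) is immaterial. -/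

import Mathlib

set_option maxHeartbeats 1000000

namespace TieAP
open Finset

variable {N : ℕ} (dist : Fin N → ℕ)

/-- The compatible rankings. -/
def Cpt : Finset (Equiv.Perm (Fin N)) :=
  Finset.univ.filter (fun σ : Equiv.Perm (Fin N) => Monotone (fun k => dist (σ k)))

/-- Sorted distances. -/
def D : Fin N → ℕ := fun k => dist (Tuple.sort dist k)

lemma monoD : Monotone (D dist) := Tuple.monotone_sort dist

lemma sort_mem_Cpt : Tuple.sort dist ∈ Cpt dist := by
  simp only [Cpt, Finset.mem_filter, Finset.mem_univ, true_and]; exact Tuple.monotone_sort dist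

lemma dist_apply {σ : Equiv.Perm (Fin N)} (hσ : σ ∈ Cpt dist) (k : Fin N) :
    dist (σ k) = D dist k := by
  have hm : Monotone (dist ∘ σ) := by
    simp only [Cpt, Finset.mem_filter, Finset.mem_univ, true_and] at hσ; exact hσ
  have := (Tuple.comp_sort_eq_comp_iff_monotone (f := dist) (σ := σ)).mpr hm
  exact congrFun this k

lemma dist_swap {x y : Fin N} (h : dist x = dist y) (z : Fin N) :
    dist (Equiv.swap x y z) = dist z := by
  rcases eq_or_ne z x with rfl | hx
  · rw [Equiv.swap_apply_left]; exact h.symm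
  rcases eq_or_ne z y with rfl | hy
  · rw [Equiv.swap_apply_right]; exact h
  · rw [Equiv.swap_apply_of_ne_of_ne hx hy]

lemma mul_mem_Cpt {π σ : Equiv.Perm (Fin N)} (hπ : ∀ z, dist (π z) = dist z)
    (hσ : σ ∈ Cpt dist) : π * σ ∈ Cpt dist := by
  simp only [Cpt, Finset.mem_filter, Finset.mem_univ, true_and] at hσ ⊢
  simpa [Equiv.Perm.mul_apply, hπ] using hσ

lemma inv_dist {π : Equiv.Perm (Fin N)} (hπ : ∀ z, dist (π z) = dist z) (z : Fin N) :
    dist (π⁻¹ z) = dist z := by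
  conv_rhs => rw [← (by simp : π (π⁻¹ z) = z), hπ]

/-- Translating the pair-fiber by a dist-preserving permutation. -/
lemma card_fiber_pair_shift (π : Equiv.Perm (Fin N)) (hπ : ∀ z, dist (π z) = dist z)
    (j k i₁ i₂ : Fin N) :
    ((Cpt dist).filter (fun σ => σ j = i₁ ∧ σ k = i₂)).card
      = ((Cpt dist).filter (fun σ => σ j = π i₁ ∧ σ k = π i₂)).card := by
  apply Finset.card_nbij' (fun σ => π * σ) (fun σ => π⁻¹ * σ)
  · intro σ hσ
    simp only [Finset.mem_coe, Finset.mem_filter] at hσ ⊢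
    obtain ⟨h1, h2, h3⟩ := hσ
    exact ⟨mul_mem_Cpt dist hπ h1, by simp [Equiv.Perm.mul_apply, h2, h3]⟩
  · intro σ hσ
    simp only [Finset.mem_coe, Finset.mem_filter] at hσ ⊢
    obtain ⟨h1, h2, h3⟩ := hσ
    refine ⟨mul_mem_Cpt dist (inv_dist dist hπ) h1, ?_, ?_⟩
    · simp [Equiv.Perm.mul_apply, h2]
    · simp [Equiv.Perm.mul_apply, h3]
  · intro σ _; group
  · intro σ _; group

lemma card_fiber_single_shift (π : Equiv.Perm (Fin N)) (hπ : ∀ z, dist (π z) = dist z)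
    (k i : Fin N) :
    ((Cpt dist).filter (fun σ => σ k = i)).card
      = ((Cpt dist).filter (fun σ => σ k = π i)).card := by
  apply Finset.card_nbij' (fun σ => π * σ) (fun σ => π⁻¹ * σ)
  · intro σ hσ
    simp only [Finset.mem_coe, Finset.mem_filter] at hσ ⊢
    exact ⟨mul_mem_Cpt dist hπ hσ.1, by simp [Equiv.Perm.mul_apply, hσ.2]⟩
  · intro σ hσ
    simp only [Finset.mem_coe, Finset.mem_filter] at hσ ⊢
    exact ⟨mul_mem_Cpt dist (inv_dist dist hπ) hσ.1, by simp [Equiv.Perm.mul_apply, hσ.2]⟩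
  · intro σ _; group
  · intro σ _; group

lemma fiber_single_const {k : Fin N} {i i' : Fin N} (h : dist i = dist i') :
    ((Cpt dist).filter (fun σ => σ k = i)).card
      = ((Cpt dist).filter (fun σ => σ k = i')).card := by
  have := card_fiber_single_shift dist (Equiv.swap i i') (dist_swap dist h) k i
  simpa using this

lemma fiber_pair_const {j k : Fin N} {i₁ i₂ i₁' i₂' : Fin N}
    (h1 : dist i₁ = dist i₁') (h2 : dist i₂ = dist i₂')
    (h12 : i₁ ≠ i₂) (h12' : i₁' ≠ i₂') :
    ((Cpt dist).filter (fun σ => σ j = i₁ ∧ σ k = i₂)).card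
      = ((Cpt dist).filter (fun σ => σ j = i₁' ∧ σ k = i₂')).card := by
  set π₁ := Equiv.swap i₁ i₁' with hπ₁
  set c := π₁ i₂ with hc
  set π₂ := Equiv.swap c i₂' with hπ₂
  have hπ₁d : ∀ z, dist (π₁ z) = dist z := dist_swap dist h1
  have hcd : dist c = dist i₂' := by rw [hc, hπ₁d]; exact h2
  have hπ₂d : ∀ z, dist (π₂ z) = dist z := dist_swap dist hcd
  have hπd : ∀ z, dist ((π₂ * π₁) z) = dist z := fun z => by
    rw [Equiv.Perm.mul_apply, hπ₂d, hπ₁d]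
  have key := card_fiber_pair_shift dist (π₂ * π₁) hπd j k i₁ i₂
  have e1 : (π₂ * π₁) i₁ = i₁' := by
    rw [Equiv.Perm.mul_apply]
    have : π₁ i₁ = i₁' := Equiv.swap_apply_left _ _
    rw [this]
    apply Equiv.swap_apply_of_ne_of_ne
    · rw [hc, ← this]; exact fun hh => h12 (π₁.injective hh.symm).symm
    · exact h12'
  have e2 : (π₂ * π₁) i₂ = i₂' := by
    rw [Equiv.Perm.mul_apply, ← hc, hπ₂]; exact Equiv.swap_apply_left _ _
  rw [key, e1, e2]

def nn (d : ℕ) : ℕ := (Finset.univ.filter (fun i : Fin N => dist i = d)).card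

lemma card_D_pred (P : ℕ → Prop) [DecidablePred P] :
    (univ.filter (fun k : Fin N => P (D dist k))).card
      = (univ.filter (fun i : Fin N => P (dist i))).card := by
  apply Finset.card_nbij' (fun k => Tuple.sort dist k) (fun i => (Tuple.sort dist)⁻¹ i)
  · intro k hk; simpa using (by simpa [D] using (mem_filter.mp hk).2 : P (dist (Tuple.sort dist k)))
  · intro i hi
    simp only [Finset.mem_coe, mem_filter, mem_univ, true_and] at hi ⊢
    simpa [D] using hi
  · intro k _; simp
  · intro i _; simp

lemma card_D_eq (e : ℕ) : (univ.filter (fun k : Fin N => D dist k = e)).card = nn dist e :=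
  card_D_pred dist (fun x => x = e)

lemma card_dist_lt (d : ℕ) :
    (univ.filter (fun i : Fin N => dist i < d)).card = ∑ e ∈ range d, nn dist e := by
  rw [Finset.card_eq_sum_card_fiberwise
    (f := dist) (t := range d) (fun i hi => by simpa using (mem_filter.mp hi).2)]
  refine Finset.sum_congr rfl (fun e he => ?_)
  rw [Finset.filter_filter]
  congr 1
  apply Finset.filter_congr
  intro i _
  simp only [mem_range] at he
  constructor
  · rintro ⟨_, h⟩; exact h
  · rintro h; exact ⟨by omega, h⟩

lemma card_D_lt (d : ℕ) :
    (univ.filter (fun k : Fin N => D dist k < d)).card = ∑ e ∈ range d, nn dist e := by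
  rw [card_D_pred dist (fun x => x < d), card_dist_lt]

lemma Ncum_mono {d d' : ℕ} (h : d ≤ d') :
    ∑ e ∈ range d, nn dist e ≤ ∑ e ∈ range d', nn dist e :=
  Finset.sum_le_sum_of_subset (Finset.range_subset_range.mpr h)

lemma D_ge (k : Fin N) : ∑ e ∈ range (D dist k), nn dist e ≤ (k : ℕ) := by
  have hsub : univ.filter (fun j : Fin N => D dist j < D dist k) ⊆ Finset.Iio k := by
    intro j hj
    simp only [mem_filter, mem_univ, true_and] at hj
    simp only [Finset.mem_Iio]
    by_contra h
    exact absurd (monoD dist (le_of_not_gt h)) (not_le.mpr hj)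
  have := Finset.card_le_card hsub
  rwa [card_D_lt, Fin.card_Iio] at this

lemma D_lt (k : Fin N) : (k : ℕ) < ∑ e ∈ range (D dist k + 1), nn dist e := by
  have hsub : Finset.Iic k ⊆ univ.filter (fun j : Fin N => D dist j < D dist k + 1) := by
    intro j hj
    simp only [Finset.mem_Iic] at hj
    simp only [mem_filter, mem_univ, true_and]
    exact Nat.lt_succ_of_le (monoD dist hj)
  have := Finset.card_le_card hsub
  rwa [card_D_lt, Fin.card_Iic] at this

lemma D_eq_iff (k : Fin N) (d : ℕ) :
    D dist k = d ↔
      (∑ e ∈ range d, nn dist e ≤ (k : ℕ) ∧ (k : ℕ) < ∑ e ∈ range (d + 1), nn dist e) := by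
  constructor
  · rintro rfl; exact ⟨D_ge dist k, D_lt dist k⟩
  · rintro ⟨h1, h2⟩
    by_contra hne
    have hge := D_ge dist k
    have hlt := D_lt dist k
    rcases Nat.lt_or_ge (D dist k) d with h | h
    · have := Ncum_mono dist (show D dist k + 1 ≤ d by omega)
      omega
    · have hd : d < D dist k := lt_of_le_of_ne h (fun hh => hne hh.symm)
      have := Ncum_mono dist (show d + 1 ≤ D dist k by omega)
      omega

lemma Ncum_total (b : ℕ) (hdist : ∀ i, dist i ≤ b) :
    ∑ e ∈ range (b + 1), nn dist e = N := by
  rw [← card_dist_lt]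
  rw [Finset.filter_true_of_mem (fun i _ => Nat.lt_succ_of_le (hdist i))]
  simp

lemma card_Iio_bucket (k : Fin N) :
    ((Finset.Iio k).filter (fun j => D dist j = D dist k)).card
      = (k : ℕ) - ∑ e ∈ range (D dist k), nn dist e := by
  have hneg : (Finset.Iio k).filter (fun j => ¬ D dist j = D dist k)
      = univ.filter (fun j : Fin N => D dist j < D dist k) := by
    ext j
    simp only [mem_filter, Finset.mem_Iio, mem_univ, true_and]
    constructor
    · rintro ⟨hjk, hne⟩
      exact lt_of_le_of_ne (monoD dist (le_of_lt hjk)) hne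
    · intro h
      refine ⟨?_, ne_of_lt h⟩
      by_contra hh
      exact absurd (monoD dist (le_of_not_gt hh)) (not_le.mpr h)
  have hsplit := Finset.card_filter_add_card_filter_not
    (s := Finset.Iio k) (p := fun j => D dist j = D dist k)
  rw [hneg, Fin.card_Iio, card_D_lt] at hsplit
  omega

lemma card_Iio_bucket_le (k : Fin N) :
    ((Finset.Iio k).filter (fun j => D dist j = D dist k)).card + 1 ≤ nn dist (D dist k) := by
  have hk : k ∈ univ.filter (fun j : Fin N => D dist j = D dist k) := by simp
  have hsub : (Finset.Iio k).filter (fun j => D dist j = D dist k)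
      ⊆ (univ.filter (fun j : Fin N => D dist j = D dist k)).erase k := by
    intro j hj
    simp only [mem_filter, Finset.mem_Iio] at hj
    exact Finset.mem_erase.mpr ⟨ne_of_lt hj.1, by simp [hj.2]⟩
  have := Finset.card_le_card hsub
  rw [Finset.card_erase_of_mem hk, card_D_eq] at this
  have hpos : 0 < nn dist (D dist k) := by
    have : k ∈ univ.filter (fun j : Fin N => D dist j = D dist k) := by simp
    have hc := Finset.card_pos.mpr ⟨k, this⟩
    rwa [card_D_eq] at hc
  omega



variable (a : Fin N → Bool)

def np (d : ℕ) : ℕ := (Finset.univ.filter (fun i : Fin N => dist i = d ∧ a i = true)).card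

lemma np_le_nn (d : ℕ) : np dist a d ≤ nn dist d := by
  apply Finset.card_le_card
  intro i hi
  simp only [Finset.mem_filter] at hi ⊢
  exact ⟨hi.1, hi.2.1⟩

/-- Generic double counting: if all fibers of `f` over `t` have the same size, then
the number of elements of `s` whose image satisfies `q`, times `t.card`,
equals `s.card` times the number of elements of `t` satisfying `q`. -/
lemma swap_count {α β : Type*} [DecidableEq β] (s : Finset α) (f : α → β) (t : Finset β)
    (q : β → Prop) [DecidablePred q]
    (hmap : ∀ x ∈ s, f x ∈ t)
    (hconst : ∀ b ∈ t, ∀ b' ∈ t,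
      (s.filter (fun x => f x = b)).card = (s.filter (fun x => f x = b')).card) :
    (s.filter (fun x => q (f x))).card * t.card = s.card * (t.filter q).card := by
  have hC : s.card = ∑ b ∈ t, (s.filter (fun x => f x = b)).card :=
    Finset.card_eq_sum_card_fiberwise hmap
  have hT : (s.filter (fun x => q (f x))).card
      = ∑ b ∈ t.filter q, (s.filter (fun x => f x = b)).card := by
    rw [Finset.card_eq_sum_card_fiberwise (f := f) (t := t.filter q)
      (fun x hx => by
        simp only [Finset.mem_coe, Finset.mem_filter] at hx ⊢
        exact ⟨hmap x hx.1, hx.2⟩)]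
    refine Finset.sum_congr rfl (fun b hb => ?_)
    simp only [Finset.mem_filter] at hb
    rw [Finset.filter_filter]
    congr 1
    apply Finset.filter_congr
    intro x _
    constructor
    · rintro ⟨_, h⟩; exact h
    · intro h; exact ⟨by rw [h]; exact hb.2, h⟩
  have key : ∀ b ∈ t.filter q, (s.filter (fun x => f x = b)).card * t.card = s.card := by
    intro b hb
    have hbt : b ∈ t := Finset.mem_filter.mp hb |>.1
    rw [hC]
    rw [Finset.sum_congr rfl (fun b' hb' => hconst b' hb' b hbt)]
    rw [Finset.sum_const, smul_eq_mul, mul_comm]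
  rw [hT, Finset.sum_mul, Finset.sum_congr rfl key, Finset.sum_const, smul_eq_mul, mul_comm]

lemma count_single (k : Fin N) :
    ((Cpt dist).filter (fun σ => a (σ k) = true)).card * nn dist (D dist k)
      = (Cpt dist).card * np dist a (D dist k) := by
  have h := swap_count (Cpt dist) (fun σ => σ k)
    (univ.filter (fun i : Fin N => dist i = D dist k)) (fun i => a i = true)
    (fun σ hσ => by simp [dist_apply dist hσ k])
    (fun i hi i' hi' => by
      simp only [Finset.mem_filter, Finset.mem_univ, true_and] at hi hi'
      exact fiber_single_const dist (by rw [hi, hi']))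
  rw [Finset.filter_filter] at h
  exact h

lemma count_pair (j k : Fin N) (hjk : j ≠ k) :
    ((Cpt dist).filter (fun σ => a (σ j) = true ∧ a (σ k) = true)).card
        * (univ.filter (fun p : Fin N × Fin N =>
            dist p.1 = D dist j ∧ dist p.2 = D dist k ∧ p.1 ≠ p.2)).card
      = (Cpt dist).card
        * ((univ.filter (fun p : Fin N × Fin N =>
            dist p.1 = D dist j ∧ dist p.2 = D dist k ∧ p.1 ≠ p.2)).filter
              (fun p => a p.1 = true ∧ a p.2 = true)).card := by
  have h := swap_count (Cpt dist) (fun σ => (σ j, σ k))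
    (univ.filter (fun p : Fin N × Fin N =>
        dist p.1 = D dist j ∧ dist p.2 = D dist k ∧ p.1 ≠ p.2))
    (fun p => a p.1 = true ∧ a p.2 = true)
    (fun σ hσ => by
      simp only [Finset.mem_filter, Finset.mem_univ, true_and]
      exact ⟨dist_apply dist hσ j, dist_apply dist hσ k, fun h => hjk (σ.injective h)⟩)
    (fun p hp p' hp' => by
      simp only [Finset.mem_filter, Finset.mem_univ, true_and] at hp hp'
      have e1 : ∀ q : Fin N × Fin N, (Cpt dist).filter (fun σ => (σ j, σ k) = q)
          = (Cpt dist).filter (fun σ => σ j = q.1 ∧ σ k = q.2) := by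
        intro q
        apply Finset.filter_congr
        intro σ _
        simp [Prod.ext_iff]
      rw [e1, e1]
      exact fiber_pair_const dist (by rw [hp.1, hp'.1]) (by rw [hp.2.1, hp'.2.1])
        hp.2.2 hp'.2.2)
  exact h

lemma nn_pos (k : Fin N) : 0 < nn dist (D dist k) := by
  have hk : k ∈ univ.filter (fun j : Fin N => D dist j = D dist k) := by simp
  have hc := Finset.card_pos.mpr ⟨k, hk⟩
  rwa [card_D_eq] at hc

lemma mul_pred (m : ℕ) : m * m - m = m * (m - 1) := by
  cases m with
  | zero => rfl
  | succ t =>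
    rw [Nat.succ_sub_one, show (t+1)*(t+1) = (t+1)*t + (t+1) by ring, Nat.add_sub_cancel]

lemma card_pairs_ne {d e : ℕ} (hde : d ≠ e) :
    (univ.filter (fun p : Fin N × Fin N => dist p.1 = d ∧ dist p.2 = e ∧ p.1 ≠ p.2)).card
      = nn dist d * nn dist e := by
  have hset : univ.filter (fun p : Fin N × Fin N => dist p.1 = d ∧ dist p.2 = e ∧ p.1 ≠ p.2)
      = (univ.filter (fun i : Fin N => dist i = d)) ×ˢ (univ.filter (fun i : Fin N => dist i = e)) := by
    ext ⟨x, y⟩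
    simp only [Finset.mem_filter, Finset.mem_univ, true_and, Finset.mem_product]
    constructor
    · rintro ⟨h1, h2, _⟩; exact ⟨h1, h2⟩
    · rintro ⟨h1, h2⟩
      exact ⟨h1, h2, fun he => hde (by rw [← h1, he, h2])⟩
  rw [hset, Finset.card_product]
  rfl

lemma card_pairs_ne_pos {d e : ℕ} (hde : d ≠ e) :
    ((univ.filter (fun p : Fin N × Fin N => dist p.1 = d ∧ dist p.2 = e ∧ p.1 ≠ p.2)).filter
        (fun p => a p.1 = true ∧ a p.2 = true)).card
      = np dist a d * np dist a e := by
  have hset : (univ.filter (fun p : Fin N × Fin N =>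
        dist p.1 = d ∧ dist p.2 = e ∧ p.1 ≠ p.2)).filter
          (fun p => a p.1 = true ∧ a p.2 = true)
      = (univ.filter (fun i : Fin N => dist i = d ∧ a i = true))
          ×ˢ (univ.filter (fun i : Fin N => dist i = e ∧ a i = true)) := by
    ext ⟨x, y⟩
    simp only [Finset.mem_filter, Finset.mem_univ, true_and, Finset.mem_product]
    constructor
    · rintro ⟨⟨h1, h2, _⟩, h4, h5⟩; exact ⟨⟨h1, h4⟩, h2, h5⟩
    · rintro ⟨⟨h1, h4⟩, h2, h5⟩
      exact ⟨⟨h1, h2, fun he => hde (by rw [← h1, he, h2])⟩, h4, h5⟩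
  rw [hset, Finset.card_product]
  rfl

lemma card_pairs_same (d : ℕ) :
    (univ.filter (fun p : Fin N × Fin N => dist p.1 = d ∧ dist p.2 = d ∧ p.1 ≠ p.2)).card
      = nn dist d * (nn dist d - 1) := by
  have hset : univ.filter (fun p : Fin N × Fin N => dist p.1 = d ∧ dist p.2 = d ∧ p.1 ≠ p.2)
      = (univ.filter (fun i : Fin N => dist i = d)).offDiag := by
    ext ⟨x, y⟩
    simp only [Finset.mem_filter, Finset.mem_univ, true_and, Finset.mem_offDiag]
    try tauto
  rw [hset, Finset.offDiag_card, ← mul_pred]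
  rfl

lemma card_pairs_same_pos (d : ℕ) :
    ((univ.filter (fun p : Fin N × Fin N => dist p.1 = d ∧ dist p.2 = d ∧ p.1 ≠ p.2)).filter
        (fun p => a p.1 = true ∧ a p.2 = true)).card
      = np dist a d * (np dist a d - 1) := by
  have hset : (univ.filter (fun p : Fin N × Fin N =>
        dist p.1 = d ∧ dist p.2 = d ∧ p.1 ≠ p.2)).filter
          (fun p => a p.1 = true ∧ a p.2 = true)
      = (univ.filter (fun i : Fin N => dist i = d ∧ a i = true)).offDiag := by
    ext ⟨x, y⟩
    simp only [Finset.mem_filter, Finset.mem_univ, true_and, Finset.mem_offDiag]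
    try tauto
  rw [hset, Finset.offDiag_card, ← mul_pred]
  rfl

lemma real_single (k : Fin N) :
    ((((Cpt dist).filter (fun σ => a (σ k) = true)).card : ℝ))
      = ((Cpt dist).card : ℝ)
          * ((np dist a (D dist k) : ℝ) / (nn dist (D dist k) : ℝ)) := by
  have h := count_single dist a k
  have hn : (0:ℝ) < (nn dist (D dist k) : ℝ) := by exact_mod_cast nn_pos dist k
  have hc : ((((Cpt dist).filter (fun σ => a (σ k) = true)).card : ℝ))
      * (nn dist (D dist k) : ℝ)
      = ((Cpt dist).card : ℝ) * (np dist a (D dist k) : ℝ) := by exact_mod_cast h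
  field_simp
  linear_combination hc

lemma real_pair_ne {j k : Fin N} (hjk : j ≠ k) (hD : D dist j ≠ D dist k) :
    ((((Cpt dist).filter (fun σ => a (σ j) = true ∧ a (σ k) = true)).card : ℝ))
      = ((Cpt dist).card : ℝ)
          * (((np dist a (D dist j) : ℝ) / (nn dist (D dist j) : ℝ))
            * ((np dist a (D dist k) : ℝ) / (nn dist (D dist k) : ℝ))) := by
  have h := count_pair dist a j k hjk
  rw [card_pairs_ne dist hD, card_pairs_ne_pos dist a hD] at h
  have hn1 : (0:ℝ) < (nn dist (D dist j) : ℝ) := by exact_mod_cast nn_pos dist j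
  have hn2 : (0:ℝ) < (nn dist (D dist k) : ℝ) := by exact_mod_cast nn_pos dist k
  have hc : ((((Cpt dist).filter (fun σ => a (σ j) = true ∧ a (σ k) = true)).card : ℝ))
      * ((nn dist (D dist j) : ℝ) * (nn dist (D dist k) : ℝ))
      = ((Cpt dist).card : ℝ)
          * ((np dist a (D dist j) : ℝ) * (np dist a (D dist k) : ℝ)) := by exact_mod_cast h
  field_simp
  linear_combination hc

lemma real_pair_same {j k : Fin N} (hjk : j ≠ k) (hD : D dist j = D dist k)
    (h2 : 2 ≤ nn dist (D dist k)) :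
    ((((Cpt dist).filter (fun σ => a (σ j) = true ∧ a (σ k) = true)).card : ℝ))
      = ((Cpt dist).card : ℝ)
          * (((np dist a (D dist k) : ℝ) / (nn dist (D dist k) : ℝ))
            * (((np dist a (D dist k) : ℝ) - 1) / ((nn dist (D dist k) : ℝ) - 1))) := by
  have h := count_pair dist a j k hjk
  rw [hD] at h
  rw [card_pairs_same dist, card_pairs_same_pos dist a] at h
  set T := (((Cpt dist).filter (fun σ => a (σ j) = true ∧ a (σ k) = true)).card)
  set nd := nn dist (D dist k)
  set pd := np dist a (D dist k)
  have hn : (1:ℝ) < (nd : ℝ) := by exact_mod_cast h2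
  rcases Nat.eq_zero_or_pos pd with hp0 | hp1
  · have hz : T * (nd * (nd - 1)) = 0 := by rw [h, hp0]; ring
    have hT0 : T = 0 := by
      rcases Nat.mul_eq_zero.mp hz with h' | h'
      · exact h'
      · exfalso; rcases Nat.mul_eq_zero.mp h' with h'' | h'' <;> omega
    rw [hT0, hp0]
    simp
  · have hc : (T : ℝ) * ((nd : ℝ) * ((nd : ℝ) - 1))
        = ((Cpt dist).card : ℝ) * ((pd : ℝ) * ((pd : ℝ) - 1)) := by
      have : (T : ℝ) * ((nd : ℝ) * (((nd - 1 : ℕ)) : ℝ))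
          = ((Cpt dist).card : ℝ) * ((pd : ℝ) * (((pd - 1 : ℕ)) : ℝ)) := by exact_mod_cast h
      rwa [Nat.cast_sub (by omega), Nat.cast_sub (by omega), Nat.cast_one] at this
    have hn0 : (nd : ℝ) ≠ 0 := by linarith
    have hn1 : (nd : ℝ) - 1 ≠ 0 := by linarith
    field_simp
    linear_combination hc

lemma Iio_filter_ne (k : Fin N) :
    (Finset.Iio k).filter (fun j => ¬ D dist j = D dist k)
      = univ.filter (fun j : Fin N => D dist j < D dist k) := by
  ext j
  simp only [Finset.mem_filter, Finset.mem_Iio, Finset.mem_univ, true_and]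
  constructor
  · rintro ⟨hjk, hne⟩
    exact lt_of_le_of_ne (monoD dist (le_of_lt hjk)) hne
  · intro h
    refine ⟨?_, ne_of_lt h⟩
    by_contra hh
    exact absurd (monoD dist (le_of_not_gt hh)) (not_le.mpr h)

lemma key_k (k : Fin N) :
    ∑ j ∈ Finset.Iic k,
        ((((Cpt dist).filter (fun σ => a (σ j) = true ∧ a (σ k) = true)).card : ℝ))
      = ((Cpt dist).card : ℝ) * ((np dist a (D dist k) : ℝ) / (nn dist (D dist k) : ℝ))
          * ((∑ e ∈ range (D dist k), (np dist a e : ℝ))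
            + (((k : ℕ) : ℝ) - ((∑ e ∈ range (D dist k), nn dist e : ℕ) : ℝ))
                * (((np dist a (D dist k) : ℝ) - 1) / ((nn dist (D dist k) : ℝ) - 1))
            + 1) := by
  rw [← Finset.Iio_insert, Finset.sum_insert (by simp)]
  -- diagonal
  have hdiag : ((Cpt dist).filter (fun σ => a (σ k) = true ∧ a (σ k) = true))
      = (Cpt dist).filter (fun σ => a (σ k) = true) := by
    apply Finset.filter_congr
    intro σ _
    simp
  rw [hdiag, real_single dist a k]
  -- split the strict lower part
  rw [← Finset.sum_filter_add_sum_filter_not (Finset.Iio k) (fun j => D dist j = D dist k)]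
  -- same-bucket
  have hsame : ∑ j ∈ (Finset.Iio k).filter (fun j => D dist j = D dist k),
      ((((Cpt dist).filter (fun σ => a (σ j) = true ∧ a (σ k) = true)).card : ℝ))
      = (((k : ℕ) : ℝ) - ((∑ e ∈ range (D dist k), nn dist e : ℕ) : ℝ))
          * (((Cpt dist).card : ℝ)
            * (((np dist a (D dist k) : ℝ) / (nn dist (D dist k) : ℝ))
              * (((np dist a (D dist k) : ℝ) - 1) / ((nn dist (D dist k) : ℝ) - 1)))) := by
    rw [Finset.sum_congr rfl (fun j hj => by
      have hj' := Finset.mem_filter.mp hj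
      have hlt : j < k := Finset.mem_Iio.mp hj'.1
      have hcard1 : 1 ≤ ((Finset.Iio k).filter (fun j => D dist j = D dist k)).card :=
        Finset.card_pos.mpr ⟨j, hj⟩
      have hle := card_Iio_bucket_le dist k
      exact real_pair_same dist a (ne_of_lt hlt) hj'.2 (by omega))]
    rw [Finset.sum_const, nsmul_eq_mul, card_Iio_bucket dist k,
      Nat.cast_sub (D_ge dist k)]
  rw [hsame, Iio_filter_ne dist k]
  -- lower buckets
  have hless : ∑ j ∈ univ.filter (fun j : Fin N => D dist j < D dist k),
      ((((Cpt dist).filter (fun σ => a (σ j) = true ∧ a (σ k) = true)).card : ℝ))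
      = (∑ e ∈ range (D dist k), (np dist a e : ℝ))
          * (((Cpt dist).card : ℝ)
            * ((np dist a (D dist k) : ℝ) / (nn dist (D dist k) : ℝ))) := by
    rw [Finset.sum_congr rfl (fun j hj => by
      have hj' := (Finset.mem_filter.mp hj).2
      have hjk : j ≠ k := fun he => absurd (he ▸ hj') (lt_irrefl _)
      exact real_pair_ne dist a hjk (ne_of_lt hj'))]
    rw [← Finset.sum_fiberwise_of_maps_to (g := D dist) (t := range (D dist k))
      (fun j hj => by
        simp only [Finset.mem_range]
        exact (Finset.mem_filter.mp hj).2)]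
    rw [Finset.sum_congr rfl (fun e he => ?_)]
    · rw [← Finset.sum_mul]
    · -- inner fiber sum
      have hfib : (univ.filter (fun j : Fin N => D dist j < D dist k)).filter
            (fun j => D dist j = e)
          = univ.filter (fun j : Fin N => D dist j = e) := by
        rw [Finset.filter_filter]
        ext j
        simp only [Finset.mem_filter, Finset.mem_univ, true_and]
        simp only [Finset.mem_range] at he
        constructor
        · rintro ⟨_, h⟩; exact h
        · intro h; exact ⟨by omega, h⟩
      rw [hfib]
      rw [Finset.sum_congr rfl (fun j hj => by
        rw [(Finset.mem_filter.mp hj).2])]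
      rw [Finset.sum_const, card_D_eq, nsmul_eq_mul]
      -- (nn e : ℝ) * (C * ((np e / nn e) * (np d / nn d))) = np e * (C * (np d / nn d))
      rcases Nat.eq_zero_or_pos (nn dist e) with h0 | hpos
      · have hp0 : np dist a e = 0 := by
          have := np_le_nn dist a e
          omega
        rw [h0, hp0]
        simp
      · have hne : (nn dist e : ℝ) ≠ 0 := by
          have : (0:ℝ) < (nn dist e : ℝ) := by exact_mod_cast hpos
          linarith
        have h1 : (nn dist e : ℝ) * ((np dist a e : ℝ) / (nn dist e : ℝ))
            = (np dist a e : ℝ) := by field_simp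
        linear_combination (((Cpt dist).card : ℝ)
          * ((np dist a (D dist k) : ℝ) / (nn dist (D dist k) : ℝ))) * h1
  rw [hless]
  ring

theorem main_aux (N b : ℕ) (hN : 1 ≤ N) (dist : Fin N → ℕ) (hdist : ∀ i, dist i ≤ b)
    (a : Fin N → Bool) :
    (∑ σ ∈ Cpt dist, (1 / ((Finset.univ.filter (fun i : Fin N => a i = true)).card : ℝ)) *
        ∑ k : Fin N, (if a (σ k) = true then (1:ℝ) else 0) *
          ((∑ j ∈ Finset.Iic k, (if a (σ j) = true then (1:ℝ) else 0)) / ((k : ℕ) + 1)))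
      / ((Cpt dist).card : ℝ)
    = ∑ d ∈ range (b + 1),
        ((np dist a d : ℝ) / ((nn dist d : ℝ)
            * ((Finset.univ.filter (fun i : Fin N => a i = true)).card : ℝ))) *
          ∑ t ∈ Finset.Icc ((∑ e ∈ range d, nn dist e) + 1) (∑ e ∈ range (d+1), nn dist e),
            (((∑ e ∈ range d, np dist a e : ℕ) : ℝ) +
                ((t : ℝ) - ((∑ e ∈ range d, nn dist e : ℕ) : ℝ) - 1)
                  * ((np dist a d : ℝ) - 1) / ((nn dist d : ℝ) - 1) + 1) / (t : ℝ) := by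
  have hCpos : (0:ℝ) < ((Cpt dist).card : ℝ) := by
    exact_mod_cast Finset.card_pos.mpr ⟨_, sort_mem_Cpt dist⟩
  rw [div_eq_iff (ne_of_gt hCpos)]
  rw [← Finset.mul_sum, Finset.sum_comm]
  have step_jk : ∀ j k : Fin N,
      ∑ σ ∈ Cpt dist, (if a (σ j) = true then (1:ℝ) else 0)
          * (if a (σ k) = true then (1:ℝ) else 0)
        = (((Cpt dist).filter (fun σ => a (σ j) = true ∧ a (σ k) = true)).card : ℝ) := by
    intro j k
    rw [← Finset.sum_boole]
    refine Finset.sum_congr rfl (fun σ _ => ?_)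
    by_cases h1 : a (σ j) = true <;> by_cases h2 : a (σ k) = true <;> simp [h1, h2]
  have step_k : ∀ k : Fin N,
      ∑ σ ∈ Cpt dist, (if a (σ k) = true then (1:ℝ) else 0) *
          ((∑ j ∈ Finset.Iic k, (if a (σ j) = true then (1:ℝ) else 0)) / ((k : ℕ) + 1))
        = (((Cpt dist).card : ℝ) * ((np dist a (D dist k) : ℝ) / (nn dist (D dist k) : ℝ))
            * ((∑ e ∈ range (D dist k), (np dist a e : ℝ))
              + (((k : ℕ) : ℝ) - ((∑ e ∈ range (D dist k), nn dist e : ℕ) : ℝ))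
                  * (((np dist a (D dist k) : ℝ) - 1) / ((nn dist (D dist k) : ℝ) - 1))
              + 1)) / (((k : ℕ) : ℝ) + 1) := by
    intro k
    rw [Finset.sum_congr rfl (fun σ _ => show
      (if a (σ k) = true then (1:ℝ) else 0) *
          ((∑ j ∈ Finset.Iic k, (if a (σ j) = true then (1:ℝ) else 0)) / ((k : ℕ) + 1))
        = (∑ j ∈ Finset.Iic k, (if a (σ j) = true then (1:ℝ) else 0)
            * (if a (σ k) = true then (1:ℝ) else 0)) / ((k : ℕ) + 1) from by
      rw [← Finset.sum_mul]; ring)]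
    rw [← Finset.sum_div, Finset.sum_comm,
      Finset.sum_congr rfl (fun j _ => step_jk j k), key_k dist a k]
  rw [Finset.sum_congr rfl (fun k _ => step_k k)]
  -- regroup ranks by distance value
  have hmaps : ∀ k ∈ (Finset.univ : Finset (Fin N)), D dist k ∈ range (b + 1) :=
    fun k _ => Finset.mem_range.mpr (Nat.lt_succ_of_le (hdist _))
  rw [← Finset.sum_fiberwise_of_maps_to hmaps (fun k =>
    (((Cpt dist).card : ℝ) * ((np dist a (D dist k) : ℝ) / (nn dist (D dist k) : ℝ))
            * ((∑ e ∈ range (D dist k), (np dist a e : ℝ))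
              + (((k : ℕ) : ℝ) - ((∑ e ∈ range (D dist k), nn dist e : ℕ) : ℝ))
                  * (((np dist a (D dist k) : ℝ) - 1) / ((nn dist (D dist k) : ℝ) - 1))
              + 1)) / (((k : ℕ) : ℝ) + 1))]
  rw [Finset.mul_sum, Finset.sum_mul]
  refine Finset.sum_congr rfl (fun d hd => ?_)
  -- reindex the bucket to the interval of ranks
  have hbij : ∑ k ∈ Finset.univ.filter (fun k : Fin N => D dist k = d),
      (((Cpt dist).card : ℝ) * ((np dist a (D dist k) : ℝ) / (nn dist (D dist k) : ℝ))
            * ((∑ e ∈ range (D dist k), (np dist a e : ℝ))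
              + (((k : ℕ) : ℝ) - ((∑ e ∈ range (D dist k), nn dist e : ℕ) : ℝ))
                  * (((np dist a (D dist k) : ℝ) - 1) / ((nn dist (D dist k) : ℝ) - 1))
              + 1)) / (((k : ℕ) : ℝ) + 1)
      = ∑ t ∈ Finset.Icc ((∑ e ∈ range d, nn dist e) + 1) (∑ e ∈ range (d+1), nn dist e),
          (((Cpt dist).card : ℝ) * ((np dist a d : ℝ) / (nn dist d : ℝ))
            * (((∑ e ∈ range d, np dist a e : ℕ) : ℝ)
              + ((t : ℝ) - ((∑ e ∈ range d, nn dist e : ℕ) : ℝ) - 1)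
                  * ((np dist a d : ℝ) - 1) / ((nn dist d : ℝ) - 1)
              + 1)) / (t : ℝ) := by
    have hNtot : ∑ e ∈ range (b + 1), nn dist e = N := Ncum_total dist b hdist
    have hmono : ∑ e ∈ range (d + 1), nn dist e ≤ ∑ e ∈ range (b + 1), nn dist e :=
      Ncum_mono dist (by simp only [Finset.mem_range] at hd; omega)
    refine Finset.sum_bij' (i := fun k _ => (k : ℕ) + 1)
      (j := fun t ht => (⟨t - 1, by
        simp only [Finset.mem_Icc] at ht
        omega⟩ : Fin N)) ?_ ?_ ?_ ?_ ?_
    · intro k hk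
      simp only [Finset.mem_filter, Finset.mem_univ, true_and] at hk
      have := (D_eq_iff dist k d).mp hk
      simp only [Finset.mem_Icc]
      omega
    · intro t ht
      simp only [Finset.mem_Icc] at ht
      simp only [Finset.mem_filter, Finset.mem_univ, true_and]
      apply (D_eq_iff dist _ d).mpr
      constructor <;> simp only [] <;> omega
    · intro k hk
      apply Fin.ext
      simp
    · intro t ht
      simp only [Finset.mem_Icc] at ht
      simp only []
      omega
    · intro k hk
      simp only [Finset.mem_filter, Finset.mem_univ, true_and] at hk
      rw [hk]
      push_cast
      ring
  rw [hbij, Finset.mul_sum, Finset.mul_sum, Finset.sum_mul]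
  refine Finset.sum_congr rfl (fun t ht => ?_)
  ring

end TieAP



/-- **Tie-aware Average Precision.** The average of AP over all rankings compatible with
the integer-valued distances equals the tie-aware closed form. -/
theorem tie_aware_AP
    (N b : ℕ) (hN : 1 ≤ N) (dist : Fin N → ℕ) (hdist : ∀ i, dist i ≤ b)
    (a : Fin N → Bool)
    (hpos : 1 ≤ (Finset.univ.filter (fun i : Fin N => a i = true)).card) :
    let Npos : ℕ := (Finset.univ.filter (fun i : Fin N => a i = true)).card
    let n : ℕ → ℕ := fun d => (Finset.univ.filter (fun i : Fin N => dist i = d)).card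
    let npos : ℕ → ℕ :=
      fun d => (Finset.univ.filter (fun i : Fin N => dist i = d ∧ a i = true)).card
    -- `Ncum d = N_{d-1}` and `Npcum d = N_{d-1}⁺` (sums over distances `j < d`)
    let Ncum : ℕ → ℕ := fun d => ∑ j ∈ Finset.range d, n j
    let Npcum : ℕ → ℕ := fun d => ∑ j ∈ Finset.range d, npos j
    let AP : Equiv.Perm (Fin N) → ℝ := fun σ =>
      (1 / (Npos : ℝ)) * ∑ k : Fin N,
        (if a (σ k) = true then (1 : ℝ) else 0) *
          ((∑ j ∈ Finset.Iic k, (if a (σ j) = true then (1 : ℝ) else 0)) / ((k : ℕ) + 1))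
    let Compat : Finset (Equiv.Perm (Fin N)) :=
      Finset.univ.filter (fun σ : Equiv.Perm (Fin N) => Monotone (fun k => dist (σ k)))
    (∑ σ ∈ Compat, AP σ) / (Compat.card : ℝ) =
      ∑ d ∈ Finset.range (b + 1),
        ((npos d : ℝ) / ((n d : ℝ) * (Npos : ℝ))) *
          ∑ t ∈ Finset.Icc (Ncum d + 1) (Ncum (d + 1)),
            ((Npcum d : ℝ) +
                ((t : ℝ) - (Ncum d : ℝ) - 1) * ((npos d : ℝ) - 1) / ((n d : ℝ) - 1) + 1) /
              (t : ℝ) := by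
  intro Npos n npos Ncum Npcum AP Compat
  exact TieAP.main_aux N b hN dist hdist a
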